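/- Let $G$ be the subgraph of $K_m^{K_n}$ induced by constant and injective maps. If $\sigma$ is a simplex of $\mathcal{N}(G)$ whose only common neighbor is the constant map $\langle 1 \rangle$ and $\sigma$ is critical for the matching $\mu$ of the paper, then $\sigma = \{\langle 2 \rangle, \langle 3 \rangle, \dots, \langle m \rangle\}$. -/

import Mathlib

/-- Adjacency in the exponential graph `K_m^{K_n}`. -/
def ExpAdj (n m : ℕ) (f g : Fin n → Fin m) : Prop :=
  ∀ i j : Fin n, i ≠ j → f i ≠ g j

/-- Vertices of the fold `G` of `K_m^{K_n}`: constant maps and injective maps. -/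
def GVert (n m : ℕ) (f : Fin n → Fin m) : Prop :=
  (∃ x, ∀ i, f i = x) ∨ Function.Injective f

/-- The constant map `⟨k+1⟩` (colors `1,…,m` are represented by `0,…,m-1`). -/
def cst (n m : ℕ) [NeZero m] (k : ℕ) : Fin n → Fin m := fun _ => (Fin.ofNat m k)

/-- Nonempty faces of the neighborhood complex `𝒩(G)` of the fold `G`. -/
def NFaceG (n m : ℕ) (σ : Finset (Fin n → Fin m)) : Prop :=
  (∀ f ∈ σ, GVert n m f) ∧ ∃ h, GVert n m h ∧ ∀ f ∈ σ, ExpAdj n m f h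

/-- `Sp n m k` is the set `S'_{k}` of the paper (with `S'_0` the full face poset
of `𝒩(G)`): the faces still unmatched after matching with the constant maps
`⟨1⟩, …, ⟨k⟩`. -/
def Sp (n m : ℕ) [NeZero m] : ℕ → Set (Finset (Fin n → Fin m))
  | 0 => {σ | σ.Nonempty ∧ NFaceG n m σ}
  | k + 1 =>
      Sp n m k \
        ({σ | σ ∈ Sp n m k ∧ cst n m k ∉ σ ∧ insert (cst n m k) σ ∈ Sp n m k} ∪
          (insert (cst n m k)) ''
            {σ | σ ∈ Sp n m k ∧ cst n m k ∉ σ ∧ insert (cst n m k) σ ∈ Sp n m k})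

/-- `MSet n m k` is the set `S_{k+1}` of the paper: the faces matched (by adding
the constant map `⟨k+1⟩`) at stage `k+1`. -/
def MSet (n m : ℕ) [NeZero m] (k : ℕ) : Set (Finset (Fin n → Fin m)) :=
  {σ | σ ∈ Sp n m k ∧ cst n m k ∉ σ ∧ insert (cst n m k) σ ∈ Sp n m k}

/-- A face of `𝒩(G)` is critical when it is unmatched by the matching `μ`. -/
def Critical (n m : ℕ) [NeZero m] (σ : Finset (Fin n → Fin m)) : Prop :=
  σ ∈ Sp n m 0 ∧ ∀ k < m, σ ∉ MSet n m k ∧ ¬ ∃ τ ∈ MSet n m k, σ = insert (cst n m k) τ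

open Fin.NatCast

section helpers
variable (n m : ℕ) [NeZero m]

lemma Sp_succ (k : ℕ) :
    Sp n m (k+1) = Sp n m k \ (MSet n m k ∪ (insert (cst n m k)) '' MSet n m k) := rfl

lemma Sp_subset {j k : ℕ} (h : j ≤ k) : Sp n m k ⊆ Sp n m j := by
  induction k with
  | zero => obtain rfl : j = 0 := Nat.le_zero.mp h; exact fun _ h => h
  | succ k ih =>
    rcases Nat.eq_or_lt_of_le h with rfl | h'
    · exact fun _ h => h
    · exact fun σ hσ => ih (by omega) hσ.1

lemma death {ρ : Finset (Fin n → Fin m)} {j : ℕ} (hj : 1 ≤ j)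
    (h : ρ ∈ MSet n m 0) : ρ ∉ Sp n m j := by
  intro hρ
  have h1 : ρ ∈ Sp n m 1 := Sp_subset n m hj hρ
  rw [Sp_succ] at h1
  exact h1.2 (Or.inl h)

lemma survive (τ : Finset (Fin n → Fin m)) (k : ℕ)
    (H0 : τ ∈ Sp n m 0)
    (H1 : cst n m 0 ∉ τ)
    (H2 : insert (cst n m 0) τ ∉ Sp n m 0)
    (H3 : ∀ j, 1 ≤ j → j < k → cst n m j ∈ τ ∧ τ.erase (cst n m j) ∉ Sp n m j) :
    τ ∈ Sp n m k := by
  induction k with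
  | zero => exact H0
  | succ k ih =>
    have hk : τ ∈ Sp n m k := ih (fun j h1 h2 => H3 j h1 (by omega))
    rw [Sp_succ]
    refine ⟨hk, ?_⟩
    rintro (⟨-, hc, hins⟩ | ⟨α, hα, rfl⟩)
    · rcases Nat.eq_zero_or_pos k with rfl | hkpos
      · exact H2 hins
      · exact hc (H3 k hkpos (Nat.lt_succ_self k)).1
    · rcases Nat.eq_zero_or_pos k with rfl | hkpos
      · exact H1 (Finset.mem_insert_self _ _)
      · obtain ⟨hαS, hcα, hinsS⟩ := hα
        have he : (insert (cst n m k) α).erase (cst n m k) = α := Finset.erase_insert hcα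
        exact (H3 k hkpos (Nat.lt_succ_self k)).2 (by rw [he]; exact hαS)

lemma exists_ne_of_two_le (hn : 2 ≤ n) (i : Fin n) : ∃ j : Fin n, j ≠ i := by
  haveI : Nontrivial (Fin n) := Fin.nontrivial_iff_two_le.mpr hn
  exact exists_ne i

lemma cst_adj_right (hn2 : 2 ≤ n) {k : ℕ} {f : Fin n → Fin m}
    (h : ExpAdj n m f (cst n m k)) : ∀ i, f i ≠ (k : Fin m) := by
  intro i
  obtain ⟨j, hj⟩ := exists_ne_of_two_le n hn2 i
  exact h i j (Ne.symm hj)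

lemma cst_adj_left (hn2 : 2 ≤ n) {k : ℕ} {g : Fin n → Fin m}
    (h : ExpAdj n m (cst n m k) g) : ∀ j, g j ≠ (k : Fin m) := by
  intro j
  obtain ⟨i, hi⟩ := exists_ne_of_two_le n hn2 j
  exact fun he => h i j hi he.symm

lemma mk_adj_right {k : ℕ} {f : Fin n → Fin m}
    (h : ∀ i, f i ≠ (k : Fin m)) : ExpAdj n m f (cst n m k) :=
  fun i _ _ => h i

lemma mk_adj_left {k : ℕ} {g : Fin n → Fin m}
    (h : ∀ j, g j ≠ (k : Fin m)) : ExpAdj n m (cst n m k) g :=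
  fun _ j _ he => h j he.symm

lemma cst_ne (hn0 : 0 < n) {a b : ℕ} (ha : a < m) (hb : b < m) (hab : a ≠ b) :
    cst n m a ≠ cst n m b := by
  intro he
  have h2 := congrFun he ⟨0, hn0⟩
  simp only [cst, Fin.ofNat_eq_cast] at h2
  exact hab (by rw [← Fin.val_cast_of_lt ha, h2, Fin.val_cast_of_lt hb])

lemma matched0 (hn2 : 2 ≤ n) {j : ℕ} (hj1 : 1 ≤ j) (hjm : j < m)
    (ρ : Finset (Fin n → Fin m)) (hne : ρ.Nonempty)
    (hg : ∀ f ∈ ρ, GVert n m f)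
    (h0 : ∀ f ∈ ρ, ∀ i, f i ≠ 0)
    (hadj : ∀ f ∈ ρ, ∀ i, f i ≠ (j : Fin m)) :
    ρ ∈ MSet n m 0 := by
  have hj0 : ((j : ℕ) : Fin m) ≠ 0 := by
    intro he
    have := Fin.val_cast_of_lt hjm
    rw [he] at this
    simp at this; omega
  have hc00 : ((0 : ℕ) : Fin m) = (0 : Fin m) := Nat.cast_zero
  have hcρ : cst n m 0 ∉ ρ := by
    intro hc
    exact h0 _ hc ⟨0, by omega⟩ hc00
  refine ⟨⟨hne, hg, cst n m 0, Or.inl ⟨_, fun _ => rfl⟩, fun f hf => mk_adj_right n m (fun i => hc00 ▸ h0 f hf i)⟩, hcρ, ?_⟩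
  refine ⟨Finset.insert_nonempty _ _, ?_, cst n m j, Or.inl ⟨_, fun _ => rfl⟩, ?_⟩
  · intro f hf
    rcases Finset.mem_insert.mp hf with rfl | hf
    · exact Or.inl ⟨_, fun _ => rfl⟩
    · exact hg f hf
  · intro f hf
    rcases Finset.mem_insert.mp hf with rfl | hf
    · exact mk_adj_right n m (fun _ h => hj0 (h.symm.trans hc00))
    · exact mk_adj_right n m (hadj f hf)

end helpers

/-- If `σ` is a simplex of `𝒩(G)` whose only common neighbor in `G` is the
constant map `⟨1⟩`, and `σ` is critical for the matching `μ`, then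
`σ = {⟨2⟩, ⟨3⟩, …, ⟨m⟩}`. -/
theorem critical_cell_with_unique_neighbor (n m : ℕ) [NeZero m]
    (hn : 3 ≤ n) (hnm : n < m) (σ : Finset (Fin n → Fin m))
    (hσ : σ ∈ Sp n m 0)
    (hN : {h : Fin n → Fin m | GVert n m h ∧ ∀ f ∈ σ, ExpAdj n m f h} = {cst n m 0})
    (hcrit : Critical n m σ) :
    σ = (Finset.univ.erase (0 : Fin m)).image
      (fun x : Fin m => (fun _ => x : Fin n → Fin m)) := by
  classical
  have hn2 : 2 ≤ n := by omega
  have hn0 : 0 < n := by omega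
  have hm0 : 0 < m := Nat.pos_of_ne_zero (NeZero.ne m)
  have hc00 : ((0 : ℕ) : Fin m) = (0 : Fin m) := Nat.cast_zero
  have hσG : ∀ f ∈ σ, GVert n m f := hσ.2.1
  have h0N : GVert n m (cst n m 0) ∧ ∀ f ∈ σ, ExpAdj n m f (cst n m 0) := by
    have h : cst n m 0 ∈ {h : Fin n → Fin m | GVert n m h ∧ ∀ f ∈ σ, ExpAdj n m f h} := by
      rw [hN]; rfl
    exact h
  have havoid : ∀ f ∈ σ, ∀ i, f i ≠ 0 := by
    intro f hf i
    have h := cst_adj_right n m hn2 (h0N.2 f hf) i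
    rwa [hc00] at h
  have hc0σ : cst n m 0 ∉ σ := fun hc => havoid _ hc ⟨0, hn0⟩ hc00
  have hNmem : ∀ h : Fin n → Fin m, GVert n m h → (∀ f ∈ σ, ExpAdj n m f h) →
      h = cst n m 0 := by
    intro h hg ha
    have hm : h ∈ {h : Fin n → Fin m | GVert n m h ∧ ∀ f ∈ σ, ExpAdj n m f h} := ⟨hg, ha⟩
    rw [hN] at hm
    exact hm
  have hσSp : ∀ k, k ≤ m → σ ∈ Sp n m k := by
    intro k
    induction k with
    | zero => exact fun _ => hσ
    | succ k ih =>
      intro hk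
      rw [Sp_succ]
      refine ⟨ih (by omega), ?_⟩
      rintro (h | ⟨τ, hτ, hτe⟩)
      · exact (hcrit.2 k (by omega)).1 h
      · exact (hcrit.2 k (by omega)).2 ⟨τ, hτ, hτe.symm⟩
  by_cases hconst : ∀ f ∈ σ, ∃ x, ∀ i, f i = x
  · -- all elements are constant: conclude directly from hN
    ext g
    simp only [Finset.mem_image, Finset.mem_erase, Finset.mem_univ, and_true]
    constructor
    · intro hg
      obtain ⟨x, hx⟩ := hconst g hg
      refine ⟨x, ?_, funext fun i => (hx i).symm⟩
      intro hx0
      exact havoid g hg ⟨0, hn0⟩ (by rw [hx ⟨0, hn0⟩, hx0])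
    · rintro ⟨x, hx0, rfl⟩
      have hnot : ¬ (∀ f ∈ σ, ExpAdj n m f (fun _ => x)) := by
        intro hall
        have h := hNmem (fun _ => x) (Or.inl ⟨x, fun _ => rfl⟩) hall
        have h2 := congrFun h ⟨0, hn0⟩
        exact hx0 (h2.trans hc00)
      push_neg at hnot
      obtain ⟨f, hfσ, hfa⟩ := hnot
      simp only [ExpAdj, not_forall] at hfa
      obtain ⟨i, j, hij, hfi⟩ := hfa
      rw [not_not] at hfi
      obtain ⟨x', hx'⟩ := hconst f hfσ
      have hfx : f = fun _ => x := funext fun i' => by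
        rw [hx' i', ← hx' i]; exact hfi
      rwa [hfx] at hfσ
  · exfalso
    obtain ⟨f0', hf0'σ, hf0'nc⟩ : ∃ f ∈ σ, ¬ ∃ x, ∀ i, f i = x := by
      by_contra h; push_neg at h
      exact hconst fun f hf => h f hf
    have hP : ∃ j : ℕ, j < m ∧ ∃ f ∈ σ, (¬ ∃ x, ∀ i, f i = x) ∧ ∃ i, (f i).val = j :=
      ⟨(f0' ⟨0, hn0⟩).val, (f0' ⟨0, hn0⟩).isLt, f0', hf0'σ, hf0'nc, ⟨0, hn0⟩, rfl⟩
    set v := Nat.find hP with hvdef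
    obtain ⟨hvm, f0, hf0σ, hf0nc, i0, hf0i⟩ := Nat.find_spec hP
    have hvmin : ∀ j, j < v → ∀ f ∈ σ, (¬ ∃ x, ∀ i, f i = x) → ∀ i, (f i).val ≠ j := by
      intro j hj f hf hnc i hi
      exact Nat.find_min hP hj ⟨by omega, f, hf, hnc, i, hi⟩
    have hv1 : 1 ≤ v := by
      rcases Nat.eq_zero_or_pos v with h0 | h
      · exfalso
        have hz : (f0 i0).val = 0 := by rw [hf0i, ← hvdef, h0]
        exact havoid f0 hf0σ i0 (Fin.ext (by rw [hz]; rfl))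
      · exact h
    have hptw : ∀ j, 1 ≤ j → j < v → ∀ f ∈ σ, f ≠ cst n m j → ∀ i, f i ≠ (j : Fin m) := by
      intro j h1 h2 f hf hne i
      by_cases hc : ∃ x, ∀ i, f i = x
      · obtain ⟨x, hx⟩ := hc
        intro he
        exact hne (funext fun i' => by
          show f i' = ((j : ℕ) : Fin m); rw [hx i', ← hx i]; exact he)
      · intro he
        exact hvmin j h2 f hf hc i (by rw [he, Fin.val_cast_of_lt (by omega : j < m)])
    -- Phase 1 : cst k ∈ σ for 1 ≤ k ≤ v
    have hin : ∀ k, 1 ≤ k → k ≤ v → cst n m k ∈ σ := by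
      intro k
      induction k using Nat.strong_induction_on with
      | _ k ih =>
        intro hk1 hkv
        by_contra hknot
        have hkm : k < m := by omega
        have hkF : ((k : ℕ) : Fin m) ≠ 0 := by
          intro he
          have h := Fin.val_cast_of_lt hkm
          rw [he] at h
          simp at h; omega
        have hAk : insert (cst n m k) σ ∈ Sp n m k := by
          apply survive
          · refine ⟨Finset.insert_nonempty _ _, ?_, cst n m 0,
              Or.inl ⟨_, fun _ => rfl⟩, ?_⟩
            · intro f hf
              rcases Finset.mem_insert.mp hf with rfl | hf
              · exact Or.inl ⟨_, fun _ => rfl⟩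
              · exact hσG f hf
            · intro f hf
              rcases Finset.mem_insert.mp hf with rfl | hf
              · exact mk_adj_right n m (fun _ he => hkF (he.trans hc00))
              · exact mk_adj_right n m (fun i he => havoid f hf i (he.trans hc00))
          · intro hc
            rcases Finset.mem_insert.mp hc with he | hc
            · exact cst_ne n m hn0 hm0 hkm (by omega) he
            · exact hc0σ hc
          · rintro ⟨-, -, h, hgh, hadj⟩
            have hh0 := hNmem h hgh (fun f hf =>
              hadj f (Finset.mem_insert_of_mem (Finset.mem_insert_of_mem hf)))
            have ha := hadj (cst n m 0) (Finset.mem_insert_self _ _)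
            rw [hh0] at ha
            exact cst_adj_left n m hn2 ha ⟨0, hn0⟩ rfl
          · intro j hj1 hjk
            have hjσ : cst n m j ∈ σ := ih j (by omega) (by omega) (by omega)
            refine ⟨Finset.mem_insert_of_mem hjσ, ?_⟩
            apply death n m hj1
            apply matched0 n m hn2 hj1 (by omega : j < m)
            · exact ⟨cst n m k, Finset.mem_erase.mpr
                ⟨cst_ne n m hn0 hkm (by omega) (by omega), Finset.mem_insert_self _ _⟩⟩
            · intro f hf
              rcases Finset.mem_insert.mp (Finset.mem_erase.mp hf).2 with rfl | hfσ
              · exact Or.inl ⟨_, fun _ => rfl⟩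
              · exact hσG f hfσ
            · intro f hf i
              rcases Finset.mem_insert.mp (Finset.mem_erase.mp hf).2 with rfl | hfσ
              · exact fun he => hkF (he.trans hc00)
              · exact havoid f hfσ i
            · intro f hf i
              have hfne := (Finset.mem_erase.mp hf).1
              rcases Finset.mem_insert.mp (Finset.mem_erase.mp hf).2 with rfl | hfσ
              · intro he
                have h1 : (cst n m k i).val = k := Fin.val_cast_of_lt hkm
                have h2 : ((j : Fin m)).val = j := Fin.val_cast_of_lt (by omega)
                have h3 := congrArg Fin.val he
                omega
              · exact hptw j hj1 (by omega) f hfσ hfne i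
        exact (hcrit.2 k hkm).1 ⟨hσSp k (by omega), hknot, hAk⟩
    -- Phase 2 : contradiction at stage v
    have hvF : ((v : ℕ) : Fin m).val = v := Fin.val_cast_of_lt hvm
    have hf0v : f0 i0 = (v : Fin m) := Fin.ext (by rw [hf0i, hvF])
    have hf0ncst : ∀ j : ℕ, f0 ≠ cst n m j := fun j he =>
      hf0nc ⟨((j : ℕ) : Fin m), fun i => by rw [he]; rfl⟩
    have hcstvσ : cst n m v ∈ σ := hin v hv1 le_rfl
    set α := σ.erase (cst n m v) with hαdef
    have hf0α : f0 ∈ α := Finset.mem_erase.mpr ⟨hf0ncst v, hf0σ⟩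
    have hαsub : ∀ f ∈ α, f ∈ σ := fun f hf => (Finset.mem_erase.mp hf).2
    have hαSp : α ∈ Sp n m v := by
      apply survive
      · exact ⟨⟨f0, hf0α⟩, fun f hf => hσG f (hαsub f hf), cst n m 0,
          Or.inl ⟨_, fun _ => rfl⟩,
          fun f hf => mk_adj_right n m (fun i he => havoid f (hαsub f hf) i (he.trans hc00))⟩
      · exact fun hc => hc0σ (hαsub _ hc)
      · rintro ⟨-, -, h, hgh, hadj⟩
        have hadjα : ∀ f ∈ α, ExpAdj n m f h := fun f hf =>
          hadj f (Finset.mem_insert_of_mem hf)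
        have hadj0 : ∀ j, h j ≠ 0 := by
          intro j
          have hx := cst_adj_left n m hn2 (hadj (cst n m 0) (Finset.mem_insert_self _ _)) j
          rwa [hc00] at hx
        by_cases hhv : ∀ j, h j ≠ ((v : ℕ) : Fin m)
        · have hh0 : h = cst n m 0 := by
            apply hNmem h hgh
            intro f hf
            by_cases hfv : f = cst n m v
            · subst hfv
              exact mk_adj_left n m hhv
            · exact hadjα f (Finset.mem_erase.mpr ⟨hfv, hf⟩)
          exact hadj0 ⟨0, hn0⟩ (by rw [hh0]; exact hc00)
        · push_neg at hhv
          obtain ⟨j0, hj0⟩ := hhv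
          rcases hgh with ⟨x, hx⟩ | hinj
          · obtain ⟨j1, hj1⟩ := exists_ne_of_two_le n hn2 i0
            exact hadjα f0 hf0α i0 j1 (Ne.symm hj1) (by rw [hf0v, hx j1, ← hj0, hx j0])
          · have hinj' : Function.Injective (Function.update h j0 0) := by
              intro a b hab
              by_cases ha : a = j0 <;> by_cases hb : b = j0
              · rw [ha, hb]
              · exfalso
                rw [ha, Function.update_self, Function.update_of_ne hb] at hab
                exact hadj0 b hab.symm
              · exfalso
                rw [hb, Function.update_self, Function.update_of_ne ha] at hab
                exact hadj0 a hab
              · rw [Function.update_of_ne ha, Function.update_of_ne hb] at hab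
                exact hinj hab
            have hh'0 : Function.update h j0 0 = cst n m 0 := by
              apply hNmem _ (Or.inr hinj')
              intro f hf i j hij
              by_cases hj : j = j0
              · subst hj
                rw [Function.update_self]
                exact havoid f hf i
              · rw [Function.update_of_ne hj]
                by_cases hfv : f = cst n m v
                · subst hfv
                  intro he
                  exact hj (hinj (he.symm.trans hj0.symm))
                · exact hadjα f (Finset.mem_erase.mpr ⟨hfv, hf⟩) i j hij
            obtain ⟨j1, hj1⟩ := exists_ne_of_two_le n hn2 j0
            have hz : Function.update h j0 0 j1 = 0 := by rw [hh'0]; exact hc00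
            rw [Function.update_of_ne hj1] at hz
            exact hadj0 j1 hz
      · intro j hj1 hjv
        refine ⟨Finset.mem_erase.mpr
          ⟨cst_ne n m hn0 (by omega) hvm (by omega), hin j hj1 (by omega)⟩, ?_⟩
        apply death n m hj1
        apply matched0 n m hn2 hj1 (by omega : j < m)
        · exact ⟨f0, Finset.mem_erase.mpr ⟨hf0ncst j, hf0α⟩⟩
        · exact fun f hf => hσG f (hαsub f (Finset.mem_erase.mp hf).2)
        · exact fun f hf i => havoid f (hαsub f (Finset.mem_erase.mp hf).2) i
        · intro f hf i
          exact hptw j hj1 hjv f (hαsub f (Finset.mem_erase.mp hf).2)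
            (Finset.mem_erase.mp hf).1 i
    have hins : insert (cst n m v) α = σ := Finset.insert_erase hcstvσ
    exact (hcrit.2 v hvm).2 ⟨α,
      ⟨hαSp, Finset.notMem_erase _ _, by rw [hins]; exact hσSp v (by omega)⟩, hins.symm⟩
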